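/- Every Eulerian orientation of the hypercube Q_{2k} is strongly k-vertex-connected. -/

import Mathlib

open Finset

variable {V : Type*} [Fintype V] [DecidableEq V]

/-- Out-degree of `v` in the digraph given by `D`. -/
def outDeg (D : V → V → Bool) (v : V) : ℕ :=
  (Finset.univ.filter (fun w => D v w = true)).card

/-- In-degree of `v` in the digraph given by `D`. -/
def inDeg (D : V → V → Bool) (v : V) : ℕ :=
  (Finset.univ.filter (fun w => D w v = true)).card

/-- `D` is an orientation of the simple graph `G`: every arc of `D` is an edge of `G`,
and every edge of `G` receives exactly one of the two directions. -/
def IsOrientation (G : SimpleGraph V) (D : V → V → Bool) : Prop :=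
  (∀ v w, D v w = true → G.Adj v w) ∧ ∀ v w, G.Adj v w → (D v w = true ↔ D w v = false)

/-- An Eulerian orientation: an orientation with in-degree equal to out-degree everywhere. -/
def IsEulerianOrientation (G : SimpleGraph V) (D : V → V → Bool) : Prop :=
  IsOrientation G D ∧ ∀ v, inDeg D v = outDeg D v

/-- Number of arcs of `D` going from `A` to `B`. -/
def arcs (D : V → V → Bool) (A B : Finset V) : ℕ :=
  ((A ×ˢ B).filter (fun p => D p.1 p.2 = true)).card

/-- The digraph `D` is strongly connected on the vertex set `A`. -/
def StronglyConnectedOn (D : V → V → Bool) (A : Finset V) : Prop :=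
  ∀ v ∈ A, ∀ w ∈ A,
    Relation.ReflTransGen (fun a b => a ∈ A ∧ b ∈ A ∧ D a b = true) v w

/-- The digraph `D` is strongly `k`-vertex-connected: it has at least `k+1` vertices and
deleting any set of at most `k-1` vertices leaves a strongly connected digraph. -/
def StronglyKConnected (k : ℕ) (D : V → V → Bool) : Prop :=
  k + 1 ≤ Fintype.card V ∧
    ∀ Z : Finset V, Z.card ≤ k - 1 → StronglyConnectedOn D (Finset.univ \ Z)

/-- The `d`-dimensional hypercube graph on vertex set `Fin d → Bool`. -/
def cube (d : ℕ) : SimpleGraph (Fin d → Bool) where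
  Adj v w := (Finset.univ.filter (fun i => v i ≠ w i)).card = 1
  symm := ⟨by
    intro v w h
    have he : (Finset.univ.filter (fun i => w i ≠ v i))
        = (Finset.univ.filter (fun i => v i ≠ w i)) := by
      apply Finset.filter_congr; intro i _; simp [ne_comm]
    rw [he]; exact h⟩
  loopless := ⟨by intro v h; simp at h⟩

/-- Number of external neighbors of the vertex set `S` in `G`. -/
noncomputable def extNbrCard (G : SimpleGraph V) (S : Finset V) : ℕ :=
  {w | w ∉ S ∧ ∃ v ∈ S, G.Adj v w}.ncard

/-- Harper's vertex-isoperimetric quantity `b_v(m, Q_{2k})`: the minimum number of external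
neighbors over all vertex sets of size `m` in the hypercube `Q_{2k}`. -/
noncomputable def bv (k m : ℕ) : ℕ :=
  sInf {n | ∃ S : Finset (Fin (2 * k) → Bool), S.card = m ∧ extNbrCard (cube (2 * k)) S = n}


namespace Stmt4X

variable {d : ℕ}

abbrev Vd (d : ℕ) := Fin d → Bool

instance : DecidableRel (cube d).Adj := fun _ _ => Nat.decEq _ 1

def diffs (v w : Vd d) : Finset (Fin d) := Finset.univ.filter (fun i => v i ≠ w i)

lemma adj_iff {v w : Vd d} : (cube d).Adj v w ↔ (diffs v w).card = 1 := Iff.rfl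

lemma diffs_comm (v w : Vd d) : diffs v w = diffs w v := by
  unfold diffs; apply Finset.filter_congr; intro i _; simp [ne_comm]

lemma mem_diffs {v w : Vd d} {i : Fin d} : i ∈ diffs v w ↔ v i ≠ w i := by
  simp [diffs]

def flip (i : Fin d) (v : Vd d) : Vd d := Function.update v i (!v i)

lemma flip_apply_self (i : Fin d) (v : Vd d) : flip i v i = !v i := by
  simp [flip]

lemma flip_apply_ne (i j : Fin d) (v : Vd d) (h : j ≠ i) : flip i v j = v j := by
  simp [flip, Function.update_of_ne h]

lemma diffs_flip (i : Fin d) (v : Vd d) : diffs v (flip i v) = {i} := by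
  ext j
  simp only [mem_diffs, Finset.mem_singleton]
  constructor
  · intro h
    by_contra hne
    exact h (flip_apply_ne i j v hne).symm
  · rintro rfl
    rw [flip_apply_self]
    cases v j <;> simp

lemma adj_flip (i : Fin d) (v : Vd d) : (cube d).Adj v (flip i v) := by
  rw [adj_iff, diffs_flip]; simp

lemma bool_ne {b c : Bool} (h : b ≠ c) : c = !b := by
  revert h; cases b <;> cases c <;> simp

lemma eq_flip_of_diffs_singleton {v w : Vd d} {i : Fin d} (h : diffs v w = {i}) :
    w = flip i v := by
  funext j
  by_cases hj : j = i
  · subst hj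
    have : v j ≠ w j := by
      have : j ∈ diffs v w := by rw [h]; simp
      exact mem_diffs.1 this
    rw [flip_apply_self]
    exact bool_ne this
  · rw [flip_apply_ne i j v hj]
    have : j ∉ diffs v w := by rw [h]; simp [hj]
    have h2 := mem_diffs.not.1 this
    exact (not_ne_iff.1 h2).symm

lemma adj_iff_exists_flip {v w : Vd d} : (cube d).Adj v w ↔ ∃ i, w = flip i v := by
  constructor
  · intro h
    rw [adj_iff, Finset.card_eq_one] at h
    obtain ⟨i, hi⟩ := h
    exact ⟨i, eq_flip_of_diffs_singleton hi⟩
  · rintro ⟨i, rfl⟩; exact adj_flip i v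

lemma flip_injective (v : Vd d) : Function.Injective (fun i => flip i v) := by
  intro i i' h
  have h' : flip i v = flip i' v := h
  by_contra hne
  have h1 : flip i v i = !v i := flip_apply_self i v
  have h2 : flip i' v i = v i := flip_apply_ne i' i v (fun hh => hne hh)
  rw [h'] at h1
  rw [h1] at h2
  cases v i <;> simp at h2

/-- each vertex of the cube has degree `d` -/
lemma cube_degree (v : Vd d) : (Finset.univ.filter ((cube d).Adj v)).card = d := by
  have : ((Finset.univ : Finset (Fin d))).card
      = (Finset.univ.filter ((cube d).Adj v)).card := by
    apply Finset.card_nbij (fun i => flip i v)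
    · intro i _
      simp only [Finset.mem_coe, Finset.mem_filter, Finset.mem_univ, true_and]
      exact adj_flip i v
    · intro i _ i' _ h
      exact flip_injective v h
    · intro w hw
      simp only [Finset.coe_filter, Set.mem_setOf_eq] at hw
      obtain ⟨i, rfl⟩ := adj_iff_exists_flip.1 hw.2
      exact ⟨i, by simp, rfl⟩
  rw [← this, Finset.card_univ, Fintype.card_fin]


/-- If `z` is a common neighbour of distinct `a, a'`, then `a, a'` differ in exactly 2 coords. -/
lemma dist_two_of_common {z a a' : Vd d} (h1 : (cube d).Adj z a) (h2 : (cube d).Adj z a')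
    (hne : a ≠ a') : (diffs a a').card = 2 := by
  obtain ⟨i, rfl⟩ := adj_iff_exists_flip.1 h1
  obtain ⟨j, rfl⟩ := adj_iff_exists_flip.1 h2
  have hij : i ≠ j := by rintro rfl; exact hne rfl
  have : diffs (flip i z) (flip j z) = {i, j} := by
    ext s
    simp only [mem_diffs, Finset.mem_insert, Finset.mem_singleton]
    by_cases hsi : s = i
    · subst hsi
      simp only [flip_apply_self, flip_apply_ne j s z hij, true_or, iff_true]
      cases z s <;> simp
    · by_cases hsj : s = j
      · subst hsj
        simp only [flip_apply_self, flip_apply_ne i s z (fun hh => hsi hh), or_true, iff_true]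
        cases z s <;> simp
      · rw [flip_apply_ne i s z hsi, flip_apply_ne j s z hsj]
        simp [hsi, hsj]
  rw [this]
  rw [Finset.card_insert_of_notMem (by simp [hij]), Finset.card_singleton]

/-- The coordinate in which `z` differs from its neighbour `a` lies in `diffs a a'`
whenever `z` is also adjacent to `a' ≠ a`. -/
lemma diff_coord_mem {z a a' : Vd d} (h1 : (cube d).Adj z a) (h2 : (cube d).Adj z a')
    (hne : a ≠ a') {i : Fin d} (hi : diffs z a = {i}) : i ∈ diffs a a' := by
  obtain ⟨j, rfl⟩ := adj_iff_exists_flip.1 h2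
  rw [mem_diffs]
  have hia : z i ≠ a i := mem_diffs.1 (by rw [hi]; simp)
  have hij : i ≠ j := by
    rintro rfl
    exact hne (eq_flip_of_diffs_singleton hi)
  rw [flip_apply_ne j i z hij]
  exact fun hh => hia hh.symm

lemma flip_flip (i : Fin d) (v : Vd d) : flip i (flip i v) = v := by
  funext s
  by_cases hs : s = i
  · subst hs; rw [flip_apply_self, flip_apply_self]; cases v s <;> simp
  · rw [flip_apply_ne _ _ _ hs, flip_apply_ne _ _ _ hs]

/-- at most two common neighbours within any finset -/
lemma common_nbrs_le_two (a a' : Vd d) (hne : a ≠ a') (S : Finset (Vd d)) :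
    (S.filter (fun z => (cube d).Adj z a ∧ (cube d).Adj z a')).card ≤ 2 := by
  classical
  set F := S.filter (fun z => (cube d).Adj z a ∧ (cube d).Adj z a') with hF
  rcases F.eq_empty_or_nonempty with h | ⟨z0, hz0⟩
  · rw [h]; simp
  have hz0' := hz0
  rw [hF, Finset.mem_filter] at hz0'
  have hcard2 : (diffs a a').card = 2 := dist_two_of_common hz0'.2.1 hz0'.2.2 hne
  have hmain : F.card ≤ ((diffs a a').image (fun i => WithTop.some i)).card := by
    apply Finset.card_le_card_of_injOn (fun z => (diffs z a).min)
    · intro z hz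
      simp only [Finset.mem_coe, hF, Finset.mem_filter] at hz ⊢
      obtain ⟨i, hi⟩ := Finset.card_eq_one.1 (adj_iff.1 hz.2.1)
      rw [show (diffs z a).min = WithTop.some i by rw [hi]; exact Finset.min_singleton]
      exact Finset.mem_image_of_mem _ (diff_coord_mem hz.2.1 hz.2.2 hne hi)
    · intro z hz z' hz' heq
      simp only [hF, Finset.coe_filter, Set.mem_setOf_eq] at hz hz'
      obtain ⟨i, hi⟩ := Finset.card_eq_one.1 (adj_iff.1 hz.2.1)
      obtain ⟨i', hi'⟩ := Finset.card_eq_one.1 (adj_iff.1 hz'.2.1)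
      dsimp only at heq
      rw [hi, hi'] at heq
      simp only [Finset.min_singleton, WithTop.coe_inj] at heq
      subst heq
      have e1 : a = flip i z := eq_flip_of_diffs_singleton hi
      have e2 : a = flip i z' := eq_flip_of_diffs_singleton hi'
      have : flip i a = flip i (flip i z) := by rw [← e1]
      rw [flip_flip] at this
      have that : flip i a = flip i (flip i z') := by rw [← e2]
      rw [flip_flip] at that
      rw [← this, ← that]
  calc F.card ≤ _ := hmain
    _ ≤ (diffs a a').card := Finset.card_image_le
    _ = 2 := hcard2


section Counting

/-- number of adjacent (ordered) pairs from `A` to `B` -/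
def Ec (A B : Finset (Vd d)) : ℕ := ∑ a ∈ A, (B.filter ((cube d).Adj a)).card

/-- number of arcs from `A` to `B` (sum form) -/
def arcsP (D : Vd d → Vd d → Bool) (A B : Finset (Vd d)) : ℕ :=
  ∑ a ∈ A, (B.filter (fun b => D a b = true)).card

lemma sum_filter_swap {α β : Type*} (A : Finset α) (B : Finset β) (P : α → β → Prop)
    [∀ a b, Decidable (P a b)] :
    ∑ a ∈ A, (B.filter (fun b => P a b)).card = ∑ b ∈ B, (A.filter (fun a => P a b)).card := by
  simp only [Finset.card_filter]
  exact Finset.sum_comm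

lemma filter_card_split {α : Type*} [Fintype α] [DecidableEq α] (P : α → Prop) [DecidablePred P]
    (A : Finset α) :
    (Finset.univ.filter P).card = (A.filter P).card + ((Finset.univ \ A).filter P).card := by
  have hu := Finset.filter_union P A (Finset.univ \ A)
  rw [Finset.union_sdiff_of_subset (Finset.subset_univ A)] at hu
  rw [hu, Finset.card_union_of_disjoint]
  exact Finset.disjoint_filter_filter Finset.disjoint_sdiff

lemma Ec_add_compl (A B : Finset (Vd d)) :
    Ec A B = Ec A (B ∩ Finset.univ) := by simp

/-- sum over `A` of degrees -/
lemma Ec_univ (A : Finset (Vd d)) : Ec A Finset.univ = d * A.card := by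
  unfold Ec
  rw [Finset.sum_congr rfl (fun a _ => cube_degree a)]
  rw [Finset.sum_const, smul_eq_mul, mul_comm]

lemma Ec_split (A : Finset (Vd d)) :
    d * A.card = Ec A A + Ec A (Finset.univ \ A) := by
  rw [← Ec_univ A]
  unfold Ec
  rw [← Finset.sum_add_distrib]
  refine Finset.sum_congr rfl fun a _ => ?_
  exact filter_card_split _ A

end Counting

section Orientation

variable {D : Vd d → Vd d → Bool}

lemma adj_iff_arc (hD : IsOrientation (cube d) D) {v w : Vd d} :
    (cube d).Adj v w ↔ (D v w = true ∨ D w v = true) := by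
  constructor
  · intro h
    cases hvw : D v w
    · right
      have := hD.2 v w h
      cases hwv : D w v
      · rw [hvw] at this; simp [hwv] at this
      · rfl
    · left; rfl
  · rintro (h | h)
    · exact hD.1 v w h
    · exact ((cube d).adj_symm (hD.1 w v h))

lemma arc_asymm (hD : IsOrientation (cube d) D) {v w : Vd d}
    (h1 : D v w = true) (h2 : D w v = true) : False := by
  have hadj := hD.1 v w h1
  have := (hD.2 v w hadj).1 h1
  rw [this] at h2; exact Bool.false_ne_true h2

lemma filter_adj_card (hD : IsOrientation (cube d) D) (v : Vd d) (S : Finset (Vd d)) :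
    (S.filter ((cube d).Adj v)).card
      = (S.filter (fun w => D v w = true)).card + (S.filter (fun w => D w v = true)).card := by
  have he : S.filter ((cube d).Adj v)
      = S.filter (fun w => D v w = true) ∪ S.filter (fun w => D w v = true) := by
    rw [← Finset.filter_or]
    apply Finset.filter_congr
    intro w _
    exact ⟨fun h => (adj_iff_arc hD).1 h, fun h => (adj_iff_arc hD).2 h⟩
  rw [he, Finset.card_union_of_disjoint]
  rw [Finset.disjoint_filter]
  intro w _ h1 h2
  exact arc_asymm hD h1 h2

lemma outDeg_add_inDeg (hD : IsOrientation (cube d) D) (v : Vd d) :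
    outDeg D v + inDeg D v = d := by
  have := filter_adj_card hD v (Finset.univ)
  rw [cube_degree v] at this
  exact this.symm

lemma eulerian_deg {k : ℕ} (hd : d = 2 * k) (hD : IsEulerianOrientation (cube d) D) (v : Vd d) :
    outDeg D v = k ∧ inDeg D v = k := by
  have h1 := outDeg_add_inDeg hD.1 v
  have h2 := hD.2 v
  omega

/-- Eulerian cut identity -/
lemma arcsP_cut (hD : IsEulerianOrientation (cube d) D) (A : Finset (Vd d)) :
    arcsP D A (Finset.univ \ A) = arcsP D (Finset.univ \ A) A := by
  have hsum : ∑ v ∈ A, outDeg D v = ∑ v ∈ A, inDeg D v :=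
    Finset.sum_congr rfl (fun v _ => (hD.2 v).symm)
  have hout : ∑ v ∈ A, outDeg D v
      = ∑ v ∈ A, (A.filter (fun w => D v w = true)).card + arcsP D A (Finset.univ \ A) := by
    unfold arcsP
    rw [← Finset.sum_add_distrib]
    exact Finset.sum_congr rfl fun v _ => filter_card_split (fun w => D v w = true) A
  have hin : ∑ v ∈ A, inDeg D v
      = ∑ v ∈ A, (A.filter (fun w => D v w = true)).card + arcsP D (Finset.univ \ A) A := by
    have h1 : ∑ v ∈ A, inDeg D v = ∑ v ∈ A, ((A.filter (fun w => D w v = true)).card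
        + ((Finset.univ \ A).filter (fun w => D w v = true)).card) :=
      Finset.sum_congr rfl fun v _ => filter_card_split (fun w => D w v = true) A
    rw [h1, Finset.sum_add_distrib]
    congr 1
    · exact sum_filter_swap A A (fun x y => D y x = true)
    · exact sum_filter_swap A (Finset.univ \ A) (fun x y => D y x = true)
  rw [hout, hin] at hsum
  omega

/-- boundary pairs = twice the arcs across, for Eulerian orientations -/
lemma Ec_eq_two_arcs (hD : IsEulerianOrientation (cube d) D) (A : Finset (Vd d)) :
    Ec A (Finset.univ \ A) = 2 * arcsP D A (Finset.univ \ A) := by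
  have h0 : Ec A (Finset.univ \ A)
      = arcsP D A (Finset.univ \ A) + arcsP D (Finset.univ \ A) A := by
    unfold Ec
    have h1 : ∑ a ∈ A, ((Finset.univ \ A).filter ((cube d).Adj a)).card
        = ∑ a ∈ A, (((Finset.univ \ A).filter (fun w => D a w = true)).card
          + ((Finset.univ \ A).filter (fun w => D w a = true)).card) :=
      Finset.sum_congr rfl fun a _ => filter_adj_card hD.1 a _
    rw [h1, Finset.sum_add_distrib]
    congr 1
    exact sum_filter_swap A (Finset.univ \ A) (fun x y => D y x = true)
  rw [h0, ← arcsP_cut hD A]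
  omega

end Orientation


section MinDegree

def degIn (A : Finset (Vd d)) (a : Vd d) : ℕ := (A.filter ((cube d).Adj a)).card

lemma Ec_self_eq_sum (A : Finset (Vd d)) : Ec A A = ∑ a ∈ A, degIn A a := rfl

/-- a neighbour of `b` differing from `b` in coordinate `i` must be `flip i b` -/
lemma nbr_diff_coord {b c : Vd d} (h : (cube d).Adj b c) {i : Fin d} (hi : c i ≠ b i) :
    c = flip i b := by
  obtain ⟨j, rfl⟩ := adj_iff_exists_flip.1 h
  by_cases hij : i = j
  · subst hij; rfl
  · exfalso
    exact hi (flip_apply_ne j i b (fun hh => hij hh))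

lemma degIn_slice {A : Finset (Vd d)} {b : Vd d} (i : Fin d) (β : Bool) (hb : b i = β) :
    degIn A b ≤ degIn (A.filter (fun v => v i = β)) b + 1 := by
  classical
  unfold degIn
  have hsplit := Finset.card_filter_add_card_filter_not
    (s := A.filter ((cube d).Adj b)) (p := fun v => v i = β)
  have h1 : ((A.filter ((cube d).Adj b)).filter (fun v => v i = β))
      = (A.filter (fun v => v i = β)).filter ((cube d).Adj b) := by
    rw [Finset.filter_comm]
  have h2 : ((A.filter ((cube d).Adj b)).filter (fun v => ¬ (v i = β))).card ≤ 1 := by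
    apply Finset.card_le_one.2
    intro c hc c' hc'
    simp only [Finset.mem_filter] at hc hc'
    have e1 : c = flip i b := nbr_diff_coord hc.1.2 (by rw [hb]; exact hc.2)
    have e2 : c' = flip i b := nbr_diff_coord hc'.1.2 (by rw [hb]; exact hc'.2)
    rw [e1, e2]
  rw [h1] at hsplit
  rw [← hsplit]
  exact Nat.add_le_add_left h2 _

/-- Minimum internal degree `c` forces `2^c` vertices. -/
lemma card_ge_of_min_degree : ∀ (c : ℕ) (A : Finset (Vd d)), A.Nonempty →
    (∀ a ∈ A, c ≤ degIn A a) → 2 ^ c ≤ A.card := by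
  intro c
  induction c with
  | zero =>
    intro A hA _
    simpa using Finset.card_pos.2 hA
  | succ c ih =>
    rintro A ⟨a0, ha0⟩ hdeg
    have h1 : 0 < degIn A a0 := lt_of_lt_of_le (Nat.succ_pos c) (hdeg a0 ha0)
    obtain ⟨a1, ha1⟩ := Finset.card_pos.1 h1
    rw [Finset.mem_filter] at ha1
    have hadj : (cube d).Adj a0 a1 := ha1.2
    have hcard1 := adj_iff.1 hadj
    obtain ⟨i, hi⟩ := Finset.card_eq_one.1 hcard1
    have hdiff : a0 i ≠ a1 i := mem_diffs.1 (by rw [hi]; simp)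
    have key : ∀ (β : Bool), (A.filter (fun v => v i = β)).Nonempty →
        2 ^ c ≤ (A.filter (fun v => v i = β)).card := by
      intro β hne
      apply ih _ hne
      intro b hb
      rw [Finset.mem_filter] at hb
      have hs := degIn_slice (A := A) i β hb.2
      have hd := hdeg b hb.1
      linarith
    have hneB : ∀ β : Bool, (A.filter (fun v => v i = β)).Nonempty := by
      intro β
      by_cases h : a0 i = β
      · exact ⟨a0, Finset.mem_filter.2 ⟨ha0, h⟩⟩
      · refine ⟨a1, Finset.mem_filter.2 ⟨ha1.1, ?_⟩⟩
        cases hb : a0 i <;> cases hb1 : a1 i <;> cases β <;> simp_all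
    have hne0 := hneB false
    have hne1 := hneB true
    have hsum : (A.filter (fun v => v i = false)).card
        + (A.filter (fun v => v i = true)).card = A.card := by
      have := Finset.card_filter_add_card_filter_not
        (s := A) (p := fun v => v i = false)
      have he : A.filter (fun v => ¬ (v i = false)) = A.filter (fun v => v i = true) := by
        apply Finset.filter_congr; intro v _; simp
      rw [he] at this
      exact this
    have k0 := key false hne0
    have k1 := key true hne1
    rw [pow_succ]
    linarith

lemma exists_small_degree (A : Finset (Vd d)) (hA : A.Nonempty) :
    ∃ a ∈ A, degIn A a ≤ Nat.log 2 A.card := by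
  by_contra hcon
  push_neg at hcon
  have : 2 ^ (Nat.log 2 A.card + 1) ≤ A.card :=
    card_ge_of_min_degree _ A hA (fun a ha => hcon a ha)
  have h2 := Nat.lt_pow_succ_log_self (by norm_num : 1 < 2) A.card
  omega

end MinDegree

section Glemmas

def Gfun (m : ℕ) : ℕ := ∑ i ∈ Finset.range m, Nat.log 2 (i+1)

lemma Gfun_succ (m : ℕ) : Gfun (m+1) = Gfun m + Nat.log 2 (m+1) := Finset.sum_range_succ _ _

lemma Ec_self_erase (A : Finset (Vd d)) (a : Vd d) (ha : a ∈ A) :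
    Ec A A = Ec (A.erase a) (A.erase a) + 2 * degIn A a := by
  rw [Ec_self_eq_sum, Ec_self_eq_sum]
  rw [← Finset.add_sum_erase A (degIn A) ha]
  have h1 : ∀ b ∈ A.erase a, degIn A b
      = degIn (A.erase a) b + (if (cube d).Adj b a then 1 else 0) := by
    intro b hb
    unfold degIn
    have hrw : A.filter ((cube d).Adj b) = (insert a (A.erase a)).filter ((cube d).Adj b) := by
      rw [Finset.insert_erase ha]
    rw [hrw, Finset.filter_insert]
    by_cases hadj : (cube d).Adj b a
    · rw [if_pos hadj, if_pos hadj, Finset.card_insert_of_notMem (by simp)]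
    · rw [if_neg hadj, if_neg hadj]
      omega
  rw [Finset.sum_congr rfl h1, Finset.sum_add_distrib]
  have h2 : ∑ b ∈ A.erase a, (if (cube d).Adj b a then 1 else 0) = degIn A a := by
    rw [← Finset.card_filter]
    unfold degIn
    have he : (A.erase a).filter (fun b => (cube d).Adj b a) = A.filter ((cube d).Adj a) := by
      ext b
      simp only [Finset.mem_filter, Finset.mem_erase]
      constructor
      · rintro ⟨⟨_, hbA⟩, hadj⟩; exact ⟨hbA, (cube d).adj_symm hadj⟩
      · rintro ⟨hbA, hadj⟩
        have hba := (cube d).adj_symm hadj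
        exact ⟨⟨fun hh => (cube d).loopless.irrefl a (hh ▸ hba), hbA⟩, hba⟩
    rw [he]
  rw [h2]
  omega

lemma Ec_self_le_Gfun : ∀ (m : ℕ) (A : Finset (Vd d)), A.card = m → Ec A A ≤ 2 * Gfun m := by
  intro m
  induction m with
  | zero =>
    intro A hA
    rw [Finset.card_eq_zero.1 hA]
    simp [Ec, Gfun]
  | succ m ih =>
    intro A hA
    have hne : A.Nonempty := Finset.card_pos.1 (by omega)
    obtain ⟨a, ha, hdeg⟩ := exists_small_degree A hne
    have hcard : (A.erase a).card = m := by rw [Finset.card_erase_of_mem ha, hA]; omega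
    have := ih (A.erase a) hcard
    rw [Ec_self_erase A a ha, Gfun_succ]
    rw [hA] at hdeg
    omega

lemma Gfun_block : ∀ (j t : ℕ), t ≤ 2^j →
    Gfun (2^j - 1 + t) = Gfun (2^j - 1) + t * j := by
  intro j t
  induction t with
  | zero => intro _; simp
  | succ t ih =>
    intro ht
    have h1 : 2^j - 1 + (t+1) = (2^j - 1 + t) + 1 := by omega
    have hpos : 1 ≤ 2^j := Nat.one_le_two_pow
    rw [h1, Gfun_succ, ih (by omega)]
    have hval : (2^j - 1 + t) + 1 = 2^j + t := by omega
    rw [hval]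
    have hlog : Nat.log 2 (2^j + t) = j := by
      apply Nat.log_eq_of_pow_le_of_lt_pow
      · omega
      · rw [pow_succ]; omega
    rw [hlog]
    ring

lemma Gfun_H : ∀ j : ℕ, Gfun (2^j - 1) + 2^(j+1) = j * 2^j + 2 := by
  intro j
  induction j with
  | zero => simp [Gfun]
  | succ j ih =>
    have h1 : 2^(j+1) - 1 = 2^j - 1 + 2^j := by
      have : 1 ≤ 2^j := Nat.one_le_two_pow
      have : (2:ℕ)^(j+1) = 2^j + 2^j := by rw [pow_succ]; ring
      omega
    rw [h1, Gfun_block j (2^j) (le_refl _)]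
    have e1 : (2:ℕ)^(j+1+1) = 2 * 2^(j+1) := by rw [pow_succ]; ring
    have e2 : (2:ℕ)^(j+1) = 2 * 2^j := by rw [pow_succ]; ring
    have e3 : (j+1) * 2^(j+1) = j * 2^(j+1) + 2^(j+1) := by ring
    have e4 : j * 2^(j+1) = 2 * (j * 2^j) := by rw [e2]; ring
    have e5 : 2^j * j = j * 2^j := mul_comm _ _
    omega

lemma Gfun_le {j m : ℕ} (hj : 2 ≤ j) (hl : 2^j ≤ m) (hu : m < 2^(j+1)) :
    Gfun m + 2^j ≤ m * j := by
  have hpos : 1 ≤ 2^j := Nat.one_le_two_pow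
  have hb := Gfun_block j (m - 2^j + 1) (by omega)
  have hval : 2^j - 1 + (m - 2^j + 1) = m := by omega
  rw [hval] at hb
  have hH := Gfun_H j
  have hjle : j + 2 ≤ 2^j := by
    clear hb hH hval hl hu hpos m
    induction j with
    | zero => omega
    | succ j ih =>
      rcases Nat.lt_or_ge j 2 with h | h
      · interval_cases j
        · omega
        · norm_num
      · have := ih (by omega)
        have : (2:ℕ)^(j+1) = 2 * 2^j := by rw [pow_succ]; ring
        omega
  have e2 : (2:ℕ)^(j+1) = 2 * 2^j := by rw [pow_succ]; ring
  have hmul : (m - 2^j + 1) * j + (2^j - 1) * j = m * j := by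
    have heq : (m - 2^j + 1) + (2^j - 1) = m := by omega
    calc (m - 2^j + 1) * j + (2^j - 1) * j = ((m - 2^j + 1) + (2^j - 1)) * j := by ring
      _ = m * j := by rw [heq]
  have e5 : (2^j - 1) * j = 2^j * j - j := by rw [Nat.sub_mul, one_mul]
  have e6 : 2^j * j = j * 2^j := mul_comm _ _
  have e7 : j ≤ 2^j * j := Nat.le_mul_of_pos_left j (by positivity)
  omega
end Glemmas


section Arith

lemma lin_pow (n : ℕ) : 2*n+1 ≤ 2^(n+1) := by
  induction n with
  | zero => norm_num
  | succ n ih =>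
    have : (2:ℕ)^(n+1+1) = 2*2^(n+1) := by rw [pow_succ]; ring
    omega

lemma sq_le_pow_succ (n : ℕ) : n*n ≤ 2^(n+1) := by
  induction n with
  | zero => norm_num
  | succ n ih =>
    have h1 := lin_pow n
    have h2 : (n+1)*(n+1) = n*n + (2*n+1) := by ring
    have h3 : (2:ℕ)^(n+1+1) = 2^(n+1) + 2^(n+1) := by rw [pow_succ]; ring
    omega

lemma pred_sq_le_pow (j : ℕ) : (j-1)*(j-1) ≤ 2^j := by
  rcases j with _ | n
  · norm_num
  · simpa using sq_le_pow_succ n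

lemma lin4 : ∀ j, 4 ≤ j → 2*j+3 ≤ 2^j := by
  intro j hj
  induction j with
  | zero => omega
  | succ n ih =>
    rcases Nat.lt_or_ge n 4 with h | h
    · have hn : n = 3 := by omega
      subst hn; norm_num
    · have h1 := ih h
      have h2 : (2:ℕ)^(n+1) = 2^n + 2^n := by rw [pow_succ]; ring
      omega

lemma sq_le_pow_add_two (j : ℕ) : j*j ≤ 2^j + 2 := by
  induction j with
  | zero => norm_num
  | succ n ih =>
    rcases Nat.lt_or_ge n 4 with h | h
    · interval_cases n <;> norm_num
    · have h1 := lin4 n (by omega)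
      have h2 : (n+1)*(n+1) = n*n + (2*n+1) := by ring
      have h3 : (2:ℕ)^(n+1) = 2^n + 2^n := by rw [pow_succ]; ring
      omega

lemma k_mul_pred_lt_pow (k : ℕ) : k*(k-1) < 2^k := by
  rcases k with _ | n
  · norm_num
  · have h1 := sq_le_pow_add_two (n+1)
    have h2 : (n+1)*n + (n+1) = (n+1)*(n+1) := by ring
    have h3 : (n+1) - 1 = n := by omega
    rw [h3]
    rcases Nat.lt_or_ge n 2 with h | h
    · interval_cases n <;> norm_num
    · omega

end Arith

section Poincare

lemma card_univ_cube : (Finset.univ : Finset (Vd d)).card = 2^d := by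
  rw [Finset.card_univ]
  simp [Vd]

lemma filter_coord_card (i : Fin d) (b : Bool) :
    2 * (Finset.univ.filter (fun g : Vd d => g i = b)).card = 2^d := by
  have hbij : (Finset.univ.filter (fun g : Vd d => g i = b)).card
      = (Finset.univ.filter (fun g : Vd d => g i = !b)).card := by
    apply Finset.card_nbij' (flip i) (flip i)
    · intro g hg
      simp only [Finset.mem_coe, Finset.mem_filter, Finset.mem_univ, true_and] at hg ⊢
      rw [flip_apply_self, hg]
    · intro g hg
      simp only [Finset.mem_coe, Finset.mem_filter, Finset.mem_univ, true_and] at hg ⊢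
      rw [flip_apply_self, hg]; simp
    · intro g _; exact flip_flip i g
    · intro g _; exact flip_flip i g
  have hsplit := Finset.card_filter_add_card_filter_not
    (s := (Finset.univ : Finset (Vd d))) (p := fun g => g i = b)
  have he : (Finset.univ : Finset (Vd d)).filter (fun g => ¬ (g i = b))
      = Finset.univ.filter (fun g : Vd d => g i = !b) := by
    apply Finset.filter_congr; intro g _
    cases hgi : g i <;> cases b <;> simp
  rw [he] at hsplit
  rw [card_univ_cube] at hsplit
  linarith

lemma card_filter_product {α β : Type*} [DecidableEq α] [DecidableEq β]
    (A : Finset α) (B : Finset β) (P : α → β → Prop) [∀ a b, Decidable (P a b)] :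
    ((A ×ˢ B).filter (fun p => P p.1 p.2)).card = ∑ a ∈ A, (B.filter (fun b => P a b)).card := by
  rw [Finset.card_filter, Finset.sum_product]
  exact Finset.sum_congr rfl (fun a _ => (Finset.card_filter _ _).symm)

lemma exists_cross (P : ℕ → Prop) [DecidablePred P] :
    ∀ (n : ℕ), P 0 → ¬ P n → ∃ t, t < n ∧ P t ∧ ¬ P (t+1) := by
  intro n
  induction n with
  | zero => intro h0 hn; exact absurd h0 hn
  | succ n ih =>
    intro h0 hn
    by_cases hPn : P n
    · exact ⟨n, Nat.lt_succ_self n, hPn, hn⟩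
    · obtain ⟨t, ht, h1, h2⟩ := ih h0 hPn
      exact ⟨t, by omega, h1, h2⟩

/-- interpolation path between `u` and `v` -/
def interp (u v : Vd d) (t : ℕ) : Vd d := fun s => if (s : ℕ) < t then v s else u s

lemma interp_zero (u v : Vd d) : interp u v 0 = u := by
  funext s; simp [interp]

lemma interp_last (u v : Vd d) : interp u v d = v := by
  funext s; simp [interp, s.isLt]

lemma interp_at_lt (u v : Vd d) (t : ℕ) (s : Fin d) (h : (s:ℕ) < t) : interp u v t s = v s := by
  simp [interp, h]

lemma interp_at_ge (u v : Vd d) (t : ℕ) (s : Fin d) (h : ¬ (s:ℕ) < t) : interp u v t s = u s := by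
  simp [interp, h]

lemma interp_step (u v : Vd d) (t : ℕ) (ht : t < d)
    (hne : interp u v (t+1) ≠ interp u v t) :
    interp u v (t+1) = flip ⟨t, ht⟩ (interp u v t) ∧ v ⟨t, ht⟩ ≠ u ⟨t, ht⟩ := by
  have hagree : ∀ s : Fin d, (s:ℕ) ≠ t → interp u v (t+1) s = interp u v t s := by
    intro s hs
    by_cases hlt : (s:ℕ) < t
    · rw [interp_at_lt _ _ _ _ (by omega), interp_at_lt _ _ _ _ hlt]
    · rw [interp_at_ge _ _ _ _ (by omega), interp_at_ge _ _ _ _ hlt]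
  have hati : v ⟨t,ht⟩ ≠ u ⟨t,ht⟩ := by
    intro hcon
    apply hne; funext s
    by_cases hs : (s:ℕ) = t
    · have hseq : s = (⟨t, ht⟩ : Fin d) := Fin.ext hs
      rw [hseq]
      rw [interp_at_lt _ _ _ _ (by simp), interp_at_ge _ _ _ _ (by simp), hcon]
    · exact hagree s hs
  refine ⟨?_, hati⟩
  funext s
  by_cases hs : (s:ℕ) = t
  · have hseq : s = (⟨t, ht⟩ : Fin d) := Fin.ext hs
    rw [hseq, flip_apply_self]
    rw [interp_at_lt _ _ _ _ (by simp), interp_at_ge _ _ _ _ (by simp)]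
    exact bool_ne (Ne.symm hati)
  · rw [flip_apply_ne _ _ _ (fun hh => hs (by rw [hh]))]
    exact hagree s hs

/-- Canonical-path congestion bound: weak edge-isoperimetry of the cube. -/
lemma poincare (A : Finset (Vd d)) :
    2 * (A.card * (Finset.univ \ A).card) ≤ 2^d * Ec A (Finset.univ \ A) := by
  classical
  set Ac := Finset.univ \ A with hAc
  set S := A ×ˢ Ac with hS
  have hcross : ∀ p ∈ S, ∃ t, t < d ∧ interp p.1 p.2 t ∈ A ∧ interp p.1 p.2 (t+1) ∉ A := by
    rintro ⟨u, v⟩ hp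
    rw [hS, Finset.mem_product] at hp
    have hu : u ∈ A := hp.1
    have hv : v ∉ A := by
      have := hp.2
      rw [hAc, Finset.mem_sdiff] at this
      exact this.2
    exact exists_cross (fun t => interp u v t ∈ A) d
      (by simpa [interp_zero] using hu) (by simpa [interp_last] using hv)
  set f : Vd d × Vd d → ℕ × Vd d := fun p =>
    if h : ∃ t, t < d ∧ interp p.1 p.2 t ∈ A ∧ interp p.1 p.2 (t+1) ∉ A then
      (h.choose, interp p.1 p.2 h.choose) else (0, p.1) with hf
  -- basic facts about f on S
  have hfS : ∀ p ∈ S, (f p).1 < d ∧ interp p.1 p.2 (f p).1 = (f p).2 ∧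
      (f p).2 ∈ A ∧ interp p.1 p.2 ((f p).1 + 1) ∉ A := by
    intro p hp
    have hex := hcross p hp
    rw [hf]
    dsimp only
    rw [dif_pos hex]
    exact ⟨hex.choose_spec.1, rfl, hex.choose_spec.2.1, hex.choose_spec.2.2⟩
  have hfiber : ∀ b ∈ S.image f, (S.filter (fun p => f p = b)).card * 2 ≤ 2^d := by
    intro b hb
    obtain ⟨p0, hp0, hfp0⟩ := Finset.mem_image.1 hb
    have hb1 : b.1 < d := by rw [← hfp0]; exact (hfS p0 hp0).1
    set i : Fin d := ⟨b.1, hb1⟩ with hi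
    have hinj : (S.filter (fun p => f p = b)).card
        ≤ (Finset.univ.filter (fun g : Vd d => g i = !(b.2 i))).card := by
      apply Finset.card_le_card_of_injOn
        (fun p => fun s : Fin d => if (s : ℕ) < b.1 then p.1 s else p.2 s)
      · intro p hp
        simp only [Finset.mem_coe, Finset.mem_filter] at hp ⊢
        obtain ⟨hpS, hpf⟩ := hp
        obtain ⟨_, hxeq, hxA, hstep⟩ := hfS p hpS
        rw [hpf] at hxeq hxA hstep
        have hne : interp p.1 p.2 (b.1+1) ≠ interp p.1 p.2 b.1 := by
          intro hcon
          rw [hxeq] at hcon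
          exact hstep (by rw [hcon]; exact hxA)
        obtain ⟨_, hvi⟩ := interp_step p.1 p.2 b.1 hb1 hne
        simp only [Finset.mem_filter, Finset.mem_univ, true_and]
        rw [if_neg (by simp [hi])]
        have hxi : b.2 i = p.1 i := by
          rw [← hxeq]; exact interp_at_ge _ _ _ _ (by simp [hi])
        rw [hxi]
        exact bool_ne (Ne.symm hvi)
      · intro p hp p' hp' heq
        simp only [Finset.coe_filter, Set.mem_setOf_eq] at hp hp'
        obtain ⟨hpS, hpf⟩ := hp
        obtain ⟨hpS', hpf'⟩ := hp'
        obtain ⟨_, hxeq, _, _⟩ := hfS p hpS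
        obtain ⟨_, hxeq', _, _⟩ := hfS p' hpS'
        rw [hpf] at hxeq
        rw [hpf'] at hxeq'
        have hxx := hxeq.trans hxeq'.symm
        have h1 : p.1 = p'.1 := by
          funext s
          by_cases hs : (s:ℕ) < b.1
          · have := congrFun heq s
            simpa [if_pos hs] using this
          · have := congrFun hxx s
            rwa [interp_at_ge _ _ _ _ hs, interp_at_ge _ _ _ _ hs] at this
        have h2 : p.2 = p'.2 := by
          funext s
          by_cases hs : (s:ℕ) < b.1
          · have := congrFun hxx s
            rwa [interp_at_lt _ _ _ _ hs, interp_at_lt _ _ _ _ hs] at this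
          · have := congrFun heq s
            simpa [if_neg hs] using this
        exact Prod.ext h1 h2
    have hcount := filter_coord_card i (!(b.2 i))
    linarith
  have htotal : S.card * 2 ≤ 2^d * (S.image f).card := by
    have h1 : S.card = ∑ b ∈ S.image f, (S.filter (fun p => f p = b)).card :=
      Finset.card_eq_sum_card_image f S
    have h2 : ∑ b ∈ S.image f, (S.filter (fun p => f p = b)).card * 2
        ≤ ∑ _b ∈ S.image f, 2^d := Finset.sum_le_sum hfiber
    rw [Finset.sum_const, smul_eq_mul] at h2
    calc S.card * 2 = ∑ b ∈ S.image f, (S.filter (fun p => f p = b)).card * 2 := by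
          rw [h1, Finset.sum_mul]
      _ ≤ (S.image f).card * 2^d := h2
      _ = 2^d * (S.image f).card := mul_comm _ _
  have himg : (S.image f).card ≤ Ec A Ac := by
    have hEc : ((A ×ˢ Ac).filter (fun p => (cube d).Adj p.1 p.2)).card = Ec A Ac :=
      card_filter_product A Ac (fun a b => (cube d).Adj a b)
    rw [← hEc]
    apply Finset.card_le_card_of_injOn
      (fun b => (b.2, if h : b.1 < d then flip ⟨b.1, h⟩ b.2 else b.2))
    · intro b hb
      obtain ⟨p, hpS, hfp⟩ := Finset.mem_image.1 hb
      obtain ⟨hb1, hxeq, hxA, hstep⟩ := hfS p hpS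
      rw [hfp] at hb1 hxeq hxA hstep
      have hne : interp p.1 p.2 (b.1+1) ≠ interp p.1 p.2 b.1 := by
        intro hcon
        rw [hxeq] at hcon
        exact hstep (by rw [hcon]; exact hxA)
      obtain ⟨hflip, _⟩ := interp_step p.1 p.2 b.1 hb1 hne
      rw [hxeq] at hflip
      simp only [Finset.mem_coe, Finset.mem_filter, Finset.mem_product]
      rw [dif_pos hb1]
      refine ⟨⟨hxA, ?_⟩, ?_⟩
      · rw [hAc, Finset.mem_sdiff]
        refine ⟨Finset.mem_univ _, ?_⟩
        rw [← hflip]; exact hstep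
      · exact adj_flip _ _
    · intro b hb b' hb' heq
      obtain ⟨p, hpS, hfp⟩ := Finset.mem_image.1 hb
      obtain ⟨p', hpS', hfp'⟩ := Finset.mem_image.1 hb'
      have hb1 : b.1 < d := by rw [← hfp]; exact (hfS p hpS).1
      have hb1' : b'.1 < d := by rw [← hfp']; exact (hfS p' hpS').1
      simp only at heq
      rw [dif_pos hb1, dif_pos hb1'] at heq
      have h2 : b.2 = b'.2 := congrArg Prod.fst heq
      have h1 : flip ⟨b.1, hb1⟩ b.2 = flip ⟨b'.1, hb1'⟩ b.2 := by
        have := congrArg Prod.snd heq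
        simpa [← h2] using this
      have : (⟨b.1, hb1⟩ : Fin d) = ⟨b'.1, hb1'⟩ := flip_injective b.2 h1
      have hb11 : b.1 = b'.1 := congrArg Fin.val this
      exact Prod.ext hb11 h2
  have hScard : S.card = A.card * Ac.card := by
    rw [hS, Finset.card_product]
  calc 2 * (A.card * (Finset.univ \ A).card) = S.card * 2 := by rw [hScard, hAc]; ring
    _ ≤ 2^d * (S.image f).card := htotal
    _ ≤ 2^d * Ec A (Finset.univ \ A) := by
        have := himg
        rw [hAc] at this
        exact Nat.mul_le_mul_left _ this

end Poincare


section Pairs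

/-- number of ordered pairs at Hamming distance 2 within `A` -/
def D2 (A : Finset (Vd d)) : ℕ := ∑ a ∈ A, (A.filter (fun a' => (diffs a a').card = 2)).card

lemma P1 (A : Finset (Vd d)) : Ec A A + D2 A ≤ A.card * (A.card - 1) := by
  rw [Ec_self_eq_sum]
  unfold D2 degIn
  rw [← Finset.sum_add_distrib]
  have hle : ∀ a ∈ A, (A.filter ((cube d).Adj a)).card
      + (A.filter (fun a' => (diffs a a').card = 2)).card ≤ A.card - 1 := by
    intro a ha
    have hsub : (A.filter ((cube d).Adj a)) ∪ (A.filter (fun a' => (diffs a a').card = 2))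
        ⊆ A.erase a := by
      intro x hx
      rw [Finset.mem_union, Finset.mem_filter, Finset.mem_filter] at hx
      rw [Finset.mem_erase]
      rcases hx with ⟨hxA, hadj⟩ | ⟨hxA, h2⟩
      · refine ⟨fun hh => ?_, hxA⟩
        exact (cube d).loopless.irrefl a (hh ▸ hadj)
      · refine ⟨fun hh => ?_, hxA⟩
        rw [hh] at h2
        have hda : diffs a a = ∅ := by ext i; simp [mem_diffs]
        rw [hda] at h2
        simp at h2
    have hdisj : Disjoint (A.filter ((cube d).Adj a))
        (A.filter (fun a' => (diffs a a').card = 2)) := by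
      rw [Finset.disjoint_filter]
      intro x _ hadj h2
      have h1 : (diffs a x).card = 1 := adj_iff.1 hadj
      omega
    calc (A.filter ((cube d).Adj a)).card + (A.filter (fun a' => (diffs a a').card = 2)).card
        = ((A.filter ((cube d).Adj a)) ∪ (A.filter (fun a' => (diffs a a').card = 2))).card := by
          rw [Finset.card_union_of_disjoint hdisj]
      _ ≤ (A.erase a).card := Finset.card_le_card hsub
      _ = A.card - 1 := Finset.card_erase_of_mem ha
  calc ∑ a ∈ A, ((A.filter ((cube d).Adj a)).card
        + (A.filter (fun a' => (diffs a a').card = 2)).card)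
      ≤ ∑ _a ∈ A, (A.card - 1) := Finset.sum_le_sum hle
    _ = A.card * (A.card - 1) := by rw [Finset.sum_const, smul_eq_mul]

lemma P2 (A Z : Finset (Vd d)) :
    ∑ z ∈ Z, ((A.filter ((cube d).Adj z)).card * (A.filter ((cube d).Adj z)).card
      - (A.filter ((cube d).Adj z)).card) ≤ 2 * D2 A := by
  classical
  set W := (Z ×ˢ (A ×ˢ A)).filter
    (fun q => q.2.1 ≠ q.2.2 ∧ (cube d).Adj q.1 q.2.1 ∧ (cube d).Adj q.1 q.2.2) with hW
  have hWcard : W.card = ∑ z ∈ Z, ((A.filter ((cube d).Adj z)).card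
      * (A.filter ((cube d).Adj z)).card - (A.filter ((cube d).Adj z)).card) := by
    rw [hW, card_filter_product Z (A ×ˢ A)
      (fun z r => r.1 ≠ r.2 ∧ (cube d).Adj z r.1 ∧ (cube d).Adj z r.2)]
    refine Finset.sum_congr rfl fun z _ => ?_
    have he : (A ×ˢ A).filter (fun r => r.1 ≠ r.2 ∧ (cube d).Adj z r.1 ∧ (cube d).Adj z r.2)
        = (A.filter ((cube d).Adj z)).offDiag := by
      ext r
      rw [Finset.mem_offDiag]
      simp only [Finset.mem_filter, Finset.mem_product]
      tauto
    rw [he, Finset.offDiag_card]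
  have himg : (W.image (fun q => q.2)).card ≤ D2 A := by
    have hD2 : ((A ×ˢ A).filter (fun r => (diffs r.1 r.2).card = 2)).card = D2 A :=
      card_filter_product A A (fun a a' => (diffs a a').card = 2)
    rw [← hD2]
    apply Finset.card_le_card
    intro r hr
    obtain ⟨q, hq, hqr⟩ := Finset.mem_image.1 hr
    rw [hW, Finset.mem_filter, Finset.mem_product] at hq
    obtain ⟨⟨hz, hr2⟩, hne, ha1, ha2⟩ := hq
    rw [Finset.mem_filter]
    rw [← hqr]
    rw [Finset.mem_product] at hr2
    exact ⟨Finset.mem_product.2 hr2, dist_two_of_common ha1 ha2 hne⟩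
  have hfib : W.card ≤ 2 * (W.image (fun q => q.2)).card := by
    apply Finset.card_le_mul_card_image
    intro r hr
    obtain ⟨q0, hq0, hq0r⟩ := Finset.mem_image.1 hr
    rw [hW, Finset.mem_filter] at hq0
    have hne : r.1 ≠ r.2 := by rw [← hq0r]; exact hq0.2.1
    have hinj : (W.filter (fun q => q.2 = r)).card
        ≤ (Z.filter (fun z => (cube d).Adj z r.1 ∧ (cube d).Adj z r.2)).card := by
      apply Finset.card_le_card_of_injOn (fun q => q.1)
      · intro q hq
        simp only [Finset.mem_coe, Finset.mem_filter] at hq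
        obtain ⟨hqW, hqr⟩ := hq
        rw [hW, Finset.mem_filter, Finset.mem_product] at hqW
        simp only [Finset.mem_coe, Finset.mem_filter]
        rw [← hqr]
        exact ⟨hqW.1.1, hqW.2.2.1, hqW.2.2.2⟩
      · intro q hq q' hq' heq
        simp only [Finset.coe_filter, Set.mem_setOf_eq] at hq hq'
        have : q.2 = q'.2 := hq.2.trans hq'.2.symm
        exact Prod.ext heq this
    calc (W.filter (fun q => q.2 = r)).card
        ≤ (Z.filter (fun z => (cube d).Adj z r.1 ∧ (cube d).Adj z r.2)).card := hinj
      _ ≤ 2 := common_nbrs_le_two r.1 r.2 hne Z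
  calc ∑ z ∈ Z, ((A.filter ((cube d).Adj z)).card * (A.filter ((cube d).Adj z)).card
      - (A.filter ((cube d).Adj z)).card) = W.card := hWcard.symm
    _ ≤ 2 * (W.image (fun q => q.2)).card := hfib
    _ ≤ 2 * D2 A := by omega

lemma two_min_le (k x : ℕ) : 2 * min k x ≤ 2 + (x * x - x) := by
  have hmin := min_le_right k x
  rcases Nat.lt_or_ge x 3 with h | h
  · interval_cases x <;> omega
  · have h1 : 3 * x ≤ x * x := Nat.mul_le_mul_right x h
    omega

end Pairs


section Key

set_option maxHeartbeats 1000000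

lemma small_k_aux : ∀ k m r : ℕ, 1 ≤ k → k < m → m ≤ 2*(k*(k-1)) → m = k + r →
    k + r + 1 ≤ r * r → 3 ≤ k := by
  intro k m r hk hkm h2b hr hrsq
  by_contra hcon
  push_neg at hcon
  interval_cases k
  · norm_num at h2b; omega
  · norm_num at h2b
    have hr2 : r ≤ 2 := by omega
    interval_cases r <;> omega


lemma key (k : ℕ) (hk : 1 ≤ k) (A Z B : Finset (Vd (2*k)))
    (hApos : A.Nonempty)
    (hZ : Z.card + 1 ≤ k)
    (hdisjAB : Disjoint A B)
    (hAB : A.card ≤ B.card)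
    (hmaster : 2 * (k * A.card)
      ≤ Ec A A + 2 * ∑ z ∈ Z, min k ((A.filter ((cube (2*k)).Adj z)).card)) :
    False := by
  classical
  set m := A.card with hm
  set ζ := Z.card with hζdef
  set e2 := Ec A A with he2
  set T := ∑ z ∈ Z, min k ((A.filter ((cube (2*k)).Adj z)).card) with hTdef
  have hmpos : 1 ≤ m := Finset.card_pos.2 hApos
  have hT1 : T ≤ k * ζ := by
    rw [hTdef]
    calc ∑ z ∈ Z, min k ((A.filter ((cube (2*k)).Adj z)).card)
        ≤ ∑ _z ∈ Z, k := Finset.sum_le_sum (fun z _ => min_le_left _ _)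
      _ = ζ * k := by rw [Finset.sum_const, smul_eq_mul]
      _ = k * ζ := mul_comm _ _
  have hT2 : 2 * T ≤ 2 * ζ + 2 * D2 A := by
    have h1 : 2 * T = ∑ z ∈ Z, 2 * min k ((A.filter ((cube (2*k)).Adj z)).card) := by
      rw [hTdef, Finset.mul_sum]
    have h2 : ∑ z ∈ Z, 2 * min k ((A.filter ((cube (2*k)).Adj z)).card)
        ≤ ∑ z ∈ Z, (2 + ((A.filter ((cube (2*k)).Adj z)).card
            * (A.filter ((cube (2*k)).Adj z)).card - (A.filter ((cube (2*k)).Adj z)).card)) :=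
      Finset.sum_le_sum (fun z _ => two_min_le _ _)
    have h3 : ∑ z ∈ Z, (2 + ((A.filter ((cube (2*k)).Adj z)).card
            * (A.filter ((cube (2*k)).Adj z)).card - (A.filter ((cube (2*k)).Adj z)).card))
        = 2 * ζ + ∑ z ∈ Z, ((A.filter ((cube (2*k)).Adj z)).card
            * (A.filter ((cube (2*k)).Adj z)).card - (A.filter ((cube (2*k)).Adj z)).card) := by
      rw [Finset.sum_add_distrib, Finset.sum_const, smul_eq_mul, mul_comm]
    have h4 := P2 A Z
    linarith
  have hP1 : e2 + D2 A ≤ m * (m - 1) := P1 A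
  -- the three regimes
  rcases Nat.lt_or_ge k m with hk_m | hm_k
  · -- m > k
    rcases Nat.lt_or_ge (2*(k*(k-1))) m with h2a | h2b
    · -- case 2a : m > 2k(k-1) : use Poincaré
      have hsplit : (2*k) * m = e2 + Ec A (Finset.univ \ A) := Ec_split A
      have hEd : Ec A (Finset.univ \ A) ≤ 2 * T := by
        have hq : (2*k) * m = 2 * (k * m) := by ring
        linarith
      have hpo := poincare (d := 2*k) A
      set N := (2:ℕ)^(2*k) with hN
      have hAc : (Finset.univ \ A).card = N - m := by
        rw [Finset.card_sdiff_of_subset (Finset.subset_univ A), card_univ_cube]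
      have hNm : 2 * m ≤ N := by
        have hUB : m + B.card ≤ N := by
          rw [hN, ← card_univ_cube (d := 2*k), ← Finset.card_union_of_disjoint hdisjAB]
          exact Finset.card_le_card (Finset.subset_univ _)
        omega
      have hNpos : 0 < N := pow_pos (by norm_num) _
      have hmE : m ≤ Ec A (Finset.univ \ A) := by
        have hc1 : m * N ≤ m * (2 * (N - m)) := by
          apply Nat.mul_le_mul_left
          omega
        have hc2 : m * (2 * (N - m)) = 2 * (m * (N - m)) := by ring
        rw [hAc] at hpo
        have hc3 : m * N ≤ N * Ec A (Finset.univ \ A) := by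
          calc m * N ≤ 2 * (m * (N - m)) := by linarith
            _ ≤ N * Ec A (Finset.univ \ A) := hpo
        have hc4 : N * m ≤ N * Ec A (Finset.univ \ A) := by
          rw [mul_comm N m]; exact hc3
        exact Nat.le_of_mul_le_mul_left hc4 hNpos
      have hkζ : k * ζ ≤ k * (k-1) := Nat.mul_le_mul_left k (by omega)
      linarith
    · -- case 2b : k < m ≤ 2k(k-1)
      have hstar1 : 2 * (k * m) ≤ e2 + 2 * (k * ζ) := by linarith
      have hP5 : 2 * (k * m) + e2 ≤ 2 * ζ + 2 * (m * (m-1)) := by linarith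
      set r := m - k with hrdef
      have hr : m = k + r := by omega
      have hkζ1 : k * ζ ≤ k * (k-1) := Nat.mul_le_mul_left k (by omega)
      have hkk : k * (k-1) + k = k * k := by
        calc k * (k-1) + k = k * ((k-1) + 1) := by ring
          _ = k * k := by rw [show (k-1) + 1 = k by omega]
      have hmsub : m * (m-1) + m = m * m := by
        calc m * (m-1) + m = m * ((m-1) + 1) := by ring
          _ = m * m := by rw [show (m-1) + 1 = m by omega]
      have hkm : k * m = k * k + k * r := by rw [hr]; ring
      have hmm2 : m * m = k * k + 2 * (k * r) + r * r := by rw [hr]; ring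
      have hrsq : k + r + 1 ≤ r * r := by omega
      have hk3 : 3 ≤ k := small_k_aux k m r hk hk_m h2b hr hrsq
      have hr2 : 2 ≤ r := by
        by_contra hcon
        push_neg at hcon
        have hrr : r * r ≤ 1 * 1 := Nat.mul_le_mul (by omega) (by omega)
        omega
      have hm5 : 5 ≤ m := by omega
      set j := Nat.log 2 m with hjdef
      have hjl : 2^j ≤ m := Nat.pow_log_le_self 2 (by omega)
      have hju : m < 2^(j+1) := Nat.lt_pow_succ_log_self (by norm_num) m
      have hj2 : 2 ≤ j := by
        by_contra hcon
        push_neg at hcon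
        have h1 : j + 1 ≤ 2 := by omega
        have h2 : (2:ℕ)^(j+1) ≤ 2^2 := Nat.pow_le_pow_right (by norm_num) h1
        norm_num at h2
        omega
      have hpeel : e2 ≤ 2 * Gfun m := Ec_self_le_Gfun m A rfl
      have hGle : Gfun m + 2^j ≤ m * j := Gfun_le hj2 hjl hju
      have hstar : k * m + 2^j ≤ m * j + k * ζ := by linarith
      rcases Nat.lt_or_ge j k with hjk | hkj
      · -- S1 : j < k
        have hjr : j ≤ r := by
          by_contra hcon
          push_neg at hcon
          have h1 : r * r ≤ (j-1) * (j-1) := Nat.mul_le_mul (by omega) (by omega)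
          have h2 := pred_sq_le_pow j
          omega
        have hsq2 := sq_le_pow_add_two j
        have hmj : m * j = k * j + r * j := by rw [hr]; ring
        have e1 : j * (k-j) + j * j = j * k := by
          calc j * (k-j) + j * j = j * ((k-j) + j) := by ring
            _ = j * k := by rw [show (k-j) + j = k by omega]
        have e2r : r * (k-j) + r * j = r * k := by
          calc r * (k-j) + r * j = r * ((k-j) + j) := by ring
            _ = r * k := by rw [show (k-j) + j = k by omega]
        have hmono : j * (k-j) ≤ r * (k-j) := Nat.mul_le_mul_right _ hjr
        have cjk : k * j = j * k := mul_comm _ _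
        have ckr : k * r = r * k := mul_comm _ _
        omega
      · rcases Nat.lt_or_ge k j with hkj2 | hjk2
        · -- k < j
          have h1 : (2:ℕ)^(k+1) ≤ 2^j := Nat.pow_le_pow_right (by norm_num) (by omega)
          have h2 := k_mul_pred_lt_pow k
          omega
        · -- j = k
          have hjk3 : j = k := by omega
          rw [hjk3] at hstar
          have hcm : k * m = m * k := mul_comm _ _
          have h2 := k_mul_pred_lt_pow k
          omega
  · -- case 1 : m ≤ k
    have hmm : m * (m-1) ≤ k * (m-1) := Nat.mul_le_mul_right _ hm_k
    have hkm : k * (m - 1) + k = k * m := by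
      have h1 : (m - 1) + 1 = m := by omega
      calc k * (m-1) + k = k * ((m-1) + 1) := by ring
        _ = k * m := by rw [h1]
    linarith

end Key


section Master

variable {k : ℕ} {D : Vd (2*k) → Vd (2*k) → Bool}

/-- If every arc leaving `X` lands in `Z`, the master counting inequality holds. -/
lemma master_out (hD : IsEulerianOrientation (cube (2*k)) D)
    (X Z : Finset (Vd (2*k)))
    (hnoarc : ∀ a ∈ X, ∀ b, b ∉ X → b ∉ Z → ¬ (D a b = true)) :
    2 * (k * X.card) ≤ Ec X X + 2 * ∑ z ∈ Z, min k ((X.filter ((cube (2*k)).Adj z)).card) := by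
  classical
  have hsplit : (2*k) * X.card = Ec X X + Ec X (Finset.univ \ X) := Ec_split X
  have h2arc : Ec X (Finset.univ \ X) = 2 * arcsP D X (Finset.univ \ X) :=
    Ec_eq_two_arcs hD X
  have hXZ : arcsP D X (Finset.univ \ X) ≤ arcsP D X Z := by
    unfold arcsP
    apply Finset.sum_le_sum
    intro a ha
    apply Finset.card_le_card
    intro b hb
    rw [Finset.mem_filter, Finset.mem_sdiff] at hb
    rw [Finset.mem_filter]
    refine ⟨?_, hb.2⟩
    by_contra hbZ
    exact hnoarc a ha b hb.1.2 hbZ hb.2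
  have hmin : arcsP D X Z ≤ ∑ z ∈ Z, min k ((X.filter ((cube (2*k)).Adj z)).card) := by
    unfold arcsP
    rw [sum_filter_swap X Z (fun a b => D a b = true)]
    apply Finset.sum_le_sum
    intro z hz
    apply le_min
    · have hsub : X.filter (fun a => D a z = true) ⊆ Finset.univ.filter (fun a => D a z = true) :=
        Finset.filter_subset_filter _ (Finset.subset_univ X)
      have := Finset.card_le_card hsub
      have hin : inDeg D z = k := (eulerian_deg rfl hD z).2
      unfold inDeg at hin
      omega
    · apply Finset.card_le_card
      intro a ha
      rw [Finset.mem_filter] at ha ⊢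
      exact ⟨ha.1, (cube (2*k)).adj_symm (hD.1.1 a z ha.2)⟩
  have hq : (2*k) * X.card = 2 * (k * X.card) := by ring
  omega

/-- If every arc entering `X` comes from `Z`, the master counting inequality holds. -/
lemma master_in (hD : IsEulerianOrientation (cube (2*k)) D)
    (X Z : Finset (Vd (2*k))) (hdisj : Disjoint Z X)
    (hnoarc : ∀ b ∈ X, ∀ a, a ∉ X → a ∉ Z → ¬ (D a b = true)) :
    2 * (k * X.card) ≤ Ec X X + 2 * ∑ z ∈ Z, min k ((X.filter ((cube (2*k)).Adj z)).card) := by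
  classical
  have hsplit : (2*k) * X.card = Ec X X + Ec X (Finset.univ \ X) := Ec_split X
  have h2arc : Ec X (Finset.univ \ X) = 2 * arcsP D X (Finset.univ \ X) :=
    Ec_eq_two_arcs hD X
  have hcut : arcsP D X (Finset.univ \ X) = arcsP D (Finset.univ \ X) X := arcsP_cut hD X
  have hZX : arcsP D (Finset.univ \ X) X ≤ arcsP D Z X := by
    unfold arcsP
    have hZsub : Z ⊆ Finset.univ \ X := by
      intro z hz
      rw [Finset.mem_sdiff]
      exact ⟨Finset.mem_univ _, fun hzX => (Finset.disjoint_left.1 hdisj) hz hzX⟩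
    rw [← Finset.sum_subset hZsub ?_]
    · intro a haU haZ
      rw [Finset.mem_sdiff] at haU
      rw [Finset.card_eq_zero, Finset.filter_eq_empty_iff]
      intro b hb
      exact hnoarc b hb a haU.2 haZ
  have hmin : arcsP D Z X ≤ ∑ z ∈ Z, min k ((X.filter ((cube (2*k)).Adj z)).card) := by
    unfold arcsP
    apply Finset.sum_le_sum
    intro z hz
    apply le_min
    · have hsub : X.filter (fun b => D z b = true) ⊆ Finset.univ.filter (fun b => D z b = true) :=
        Finset.filter_subset_filter _ (Finset.subset_univ X)
      have := Finset.card_le_card hsub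
      have hout : outDeg D z = k := (eulerian_deg rfl hD z).1
      unfold outDeg at hout
      omega
    · apply Finset.card_le_card
      intro b hb
      rw [Finset.mem_filter] at hb ⊢
      exact ⟨hb.1, hD.1.1 z b hb.2⟩
  have hq : (2*k) * X.card = 2 * (k * X.card) := by ring
  omega

end Master

end Stmt4X

open Stmt4X in
theorem stmt4' (k : ℕ) (hk : 1 ≤ k)
    (D : (Fin (2 * k) → Bool) → (Fin (2 * k) → Bool) → Bool)
    (hD : IsEulerianOrientation (cube (2 * k)) D) :
    StronglyKConnected k D := by
  classical
  constructor
  · rw [← Finset.card_univ]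
    have h1 := card_univ_cube (d := 2*k)
    have h2 : k < 2^k := Nat.lt_two_pow_self
    have h3 : (2:ℕ)^k ≤ 2^(2*k) := Nat.pow_le_pow_right (by norm_num) (by omega)
    omega
  · intro Z hZcard
    intro v hv w hw
    by_contra hreach
    set R := (Finset.univ : Finset (Fin (2*k) → Bool)) \ Z with hR
    set rel := fun a b => a ∈ R ∧ b ∈ R ∧ D a b = true with hrel
    set A := R.filter (fun u => Relation.ReflTransGen rel v u) with hA
    set B := R \ A with hB
    have hAR : A ⊆ R := Finset.filter_subset _ _
    have hvA : v ∈ A := by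
      rw [hA, Finset.mem_filter]
      exact ⟨hv, Relation.ReflTransGen.refl⟩
    have hwB : w ∈ B := by
      rw [hB, Finset.mem_sdiff]
      refine ⟨hw, fun hwA => ?_⟩
      rw [hA, Finset.mem_filter] at hwA
      exact hreach hwA.2
    have harc : ∀ a ∈ A, ∀ b ∈ B, ¬ (D a b = true) := by
      intro a ha b hb hab
      rw [hB, Finset.mem_sdiff] at hb
      apply hb.2
      rw [hA, Finset.mem_filter] at ha ⊢
      refine ⟨hb.1, ha.2.trans (Relation.ReflTransGen.single ?_)⟩
      exact ⟨ha.1, hb.1, hab⟩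
    have hZk : Z.card + 1 ≤ k := by omega
    have hdisjBA : Disjoint B A := Finset.sdiff_disjoint
    have hApos : A.Nonempty := ⟨v, hvA⟩
    have hBpos : B.Nonempty := ⟨w, hwB⟩
    have hmA : ∀ a ∈ A, ∀ b, b ∉ A → b ∉ Z → ¬ (D a b = true) := by
      intro a ha b hbA hbZ
      apply harc a ha
      rw [hB, Finset.mem_sdiff]
      refine ⟨?_, hbA⟩
      rw [hR, Finset.mem_sdiff]
      exact ⟨Finset.mem_univ _, hbZ⟩
    have hmB : ∀ b ∈ B, ∀ a, a ∉ B → a ∉ Z → ¬ (D a b = true) := by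
      intro b hb a haB haZ
      have haR : a ∈ R := by
        rw [hR, Finset.mem_sdiff]
        exact ⟨Finset.mem_univ _, haZ⟩
      have haA : a ∈ A := by
        by_contra hcon
        apply haB
        rw [hB, Finset.mem_sdiff]
        exact ⟨haR, hcon⟩
      exact harc a haA b hb
    have hBR : B ⊆ R := by rw [hB]; exact Finset.sdiff_subset
    have hdisjZB : Disjoint Z B := by
      rw [Finset.disjoint_left]
      intro z hz hzB
      have := hBR hzB
      rw [hR, Finset.mem_sdiff] at this
      exact this.2 hz
    have hMA := master_out hD A Z hmA
    have hMB := master_in hD B Z hdisjZB hmB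
    rcases le_total A.card B.card with hle | hle
    · exact key k hk A Z B hApos hZk hdisjBA.symm hle hMA
    · exact key k hk B Z A hBpos hZk hdisjBA hle hMB

/-- Every Eulerian orientation of the hypercube `Q_{2k}` is strongly
`k`-vertex-connected. -/
theorem stmt4 (k : ℕ) (hk : 1 ≤ k)
    (D : (Fin (2 * k) → Bool) → (Fin (2 * k) → Bool) → Bool)
    (hD : IsEulerianOrientation (cube (2 * k)) D) :
    StronglyKConnected k D := stmt4' k hk D hD
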